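/- The Gumbel-max identity: if g_1,…,g_m are i.i.d. standard Gumbel random variables and α ∈ (0,∞)^m, then P(argmax_j (log α_j + g_j) = k) = α_k / Σ_j α_j for each k. -/

import Mathlib

open Finset MeasureTheory ProbabilityTheory Set Real
open Finset MeasureTheory ProbabilityTheory Set Real

lemma expMeasure_eq_withDensity (r : ℝ) :
    expMeasure r = MeasureTheory.volume.withDensity (exponentialPDF r) := by
  have : exponentialPDF r = gammaPDF 1 r := by
    funext x
    rfl
  rw [this]
  rfl

lemma expMeasure_Iic {r : ℝ} (hr : 0 < r) (x : ℝ) :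
    expMeasure r (Set.Iic x) = ENNReal.ofReal (if 0 ≤ x then 1 - Real.exp (-(r*x)) else 0) := by
  rw [expMeasure_eq_withDensity, withDensity_apply _ measurableSet_Iic,
    lintegral_exponentialPDF_eq_antiDeriv hr x]

lemma expMeasure_Ioi {r : ℝ} (hr : 0 < r) {t : ℝ} (ht : 0 ≤ t) :
    expMeasure r (Set.Ioi t) = ENNReal.ofReal (Real.exp (-(r*t))) := by
  haveI := isProbabilityMeasure_expMeasure hr
  have h1 : Set.Ioi t = (Set.Iic t)ᶜ := by simp
  have he1 : Real.exp (-(r*t)) ≤ 1 := Real.exp_le_one_iff.2 (by nlinarith)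
  rw [h1, measure_compl measurableSet_Iic (measure_ne_top _ _), measure_univ,
    expMeasure_Iic hr, if_pos ht]
  rw [ENNReal.sub_eq_of_eq_add ENNReal.ofReal_ne_top]
  rw [← ENNReal.ofReal_add (Real.exp_nonneg _) (by linarith), ← ENNReal.ofReal_one]
  ring_nf

lemma gumbel_lt {Ω : Type*} [MeasurableSpace Ω] (P : Measure Ω) [IsProbabilityMeasure P]
    (g : Ω → ℝ) (hg : Measurable g)
    (hcdf : ∀ x : ℝ, P {ω | g ω ≤ x} = ENNReal.ofReal (Real.exp (-Real.exp (-x))))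
    (t : ℝ) : P {ω | g ω < t} = ENNReal.ofReal (Real.exp (-Real.exp (-t))) := by
  set A : ℕ → Set Ω := fun n => {ω | g ω ≤ t - 1/(n+1)} with hA
  have hmono : Monotone A := by
    intro a b hab ω hω
    have h1 : (1:ℝ)/(b+1) ≤ 1/(a+1) := by
      apply one_div_le_one_div_of_le (by positivity)
      exact_mod_cast by omega
    simp only [hA, Set.mem_setOf_eq] at hω ⊢
    linarith
  have hunion : (⋃ n, A n) = {ω | g ω < t} := by
    ext ω
    simp only [Set.mem_iUnion, hA, Set.mem_setOf_eq]
    constructor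
    · rintro ⟨n, hn⟩
      have : (0:ℝ) < 1/(n+1) := by positivity
      linarith
    · intro h
      obtain ⟨n, hn⟩ := exists_nat_one_div_lt (sub_pos.2 h)
      exact ⟨n, by push_cast at hn ⊢; linarith⟩
  have h1 := tendsto_measure_iUnion_atTop (μ := P) hmono
  rw [hunion] at h1
  have h2 : (fun n => P (A n)) = fun n : ℕ =>
      ENNReal.ofReal (Real.exp (-Real.exp (-(t - 1/(n+1))))) := by
    funext n; exact hcdf _
  rw [show P ∘ A = fun n => P (A n) from rfl, h2] at h1
  have hF : Continuous fun u : ℝ => ENNReal.ofReal (Real.exp (-Real.exp (-u))) :=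
    ENNReal.continuous_ofReal.comp (by continuity)
  have h3 : Filter.Tendsto (fun n : ℕ => t - 1/((n:ℝ)+1)) Filter.atTop (nhds t) := by
    have := tendsto_one_div_add_atTop_nhds_zero_nat (𝕜 := ℝ)
    simpa using Filter.Tendsto.sub (tendsto_const_nhds (x := t)) this
  exact tendsto_nhds_unique h1 ((hF.tendsto t).comp h3)

lemma gumbel_law {Ω : Type*} [MeasurableSpace Ω] (P : Measure Ω) [IsProbabilityMeasure P]
    (g : Ω → ℝ) (hg : Measurable g)
    (hcdf : ∀ x : ℝ, P {ω | g ω ≤ x} = ENNReal.ofReal (Real.exp (-Real.exp (-x))))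
    {a : ℝ} (ha : 0 < a) :
    P.map (fun ω => Real.exp (-(Real.log a + g ω))) = expMeasure a := by
  have hY : Measurable fun ω => Real.exp (-(Real.log a + g ω)) :=
    (measurable_const.add hg).neg.exp
  haveI : IsProbabilityMeasure (P.map (fun ω => Real.exp (-(Real.log a + g ω)))) :=
    Measure.isProbabilityMeasure_map hY.aemeasurable
  refine MeasureTheory.Measure.ext_of_Iic _ _ fun x => ?_
  rw [Measure.map_apply hY measurableSet_Iic, expMeasure_Iic ha]
  rcases le_or_gt x 0 with hx | hx
  · have hset : (fun ω => Real.exp (-(Real.log a + g ω))) ⁻¹' Set.Iic x = ∅ := by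
      ext ω
      simp only [Set.mem_preimage, Set.mem_Iic, Set.mem_empty_iff_false, iff_false, not_le]
      exact lt_of_le_of_lt hx (Real.exp_pos _)
    rw [hset, measure_empty]
    split_ifs with h
    · have : x = 0 := le_antisymm hx h
      simp [this]
    · simp
  · set t := -Real.log x - Real.log a with htdef
    have hset : (fun ω => Real.exp (-(Real.log a + g ω))) ⁻¹' Set.Iic x = {ω | g ω < t}ᶜ := by
      ext ω
      simp only [Set.mem_preimage, Set.mem_Iic, Set.mem_compl_iff, Set.mem_setOf_eq, not_lt, htdef]
      rw [← Real.le_log_iff_exp_le hx]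
      constructor <;> intro h <;> linarith
    have hexp : Real.exp (-t) = a * x := by
      rw [htdef, show -(-Real.log x - Real.log a) = Real.log a + Real.log x by ring,
        Real.exp_add, Real.exp_log ha, Real.exp_log hx]
    have hle : Real.exp (-Real.exp (-t)) ≤ 1 :=
      Real.exp_le_one_iff.2 (by nlinarith [Real.exp_nonneg (-t)])
    have hms : MeasurableSet {ω | g ω < t} := measurableSet_lt hg measurable_const
    rw [hset, measure_compl hms (measure_ne_top _ _), measure_univ,
      gumbel_lt P g hg hcdf t, if_pos hx.le, hexp]
    have key : Real.exp (-(a*x)) ≤ 1 := Real.exp_le_one_iff.2 (by nlinarith)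
    rw [ENNReal.sub_eq_of_eq_add ENNReal.ofReal_ne_top]
    rw [← ENNReal.ofReal_add (by linarith) (Real.exp_nonneg _), ← ENNReal.ofReal_one]
    ring_nf
lemma pi_exp_argmin {n : ℕ} (β : Fin (n+1) → ℝ) (hβ : ∀ j, 0 < β j) (k : Fin (n+1)) :
    Measure.pi (fun j => expMeasure (β j)) {x | ∀ l, l ≠ k → x k < x l}
      = ENNReal.ofReal (β k / ∑ j, β j) := by
  haveI : ∀ j : Fin (n+1), IsProbabilityMeasure (expMeasure (β j)) :=
    fun j => isProbabilityMeasure_expMeasure (hβ j)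
  set s := ∑ j, β j with hsdef
  have hs : 0 < s := Finset.sum_pos (fun j _ => hβ j) ⟨k, Finset.mem_univ k⟩
  set T : Set (ℝ × (Fin n → ℝ)) := {p | ∀ j, p.1 < p.2 j} with hT
  have hTm : MeasurableSet T := by
    have : T = ⋂ j, {p : ℝ × (Fin n → ℝ) | p.1 < p.2 j} := by
      ext p; simp [hT]
    rw [this]
    exact MeasurableSet.iInter fun j =>
      measurableSet_lt measurable_fst ((measurable_pi_apply j).comp measurable_snd)
  have hpre : {x : Fin (n+1) → ℝ | ∀ l, l ≠ k → x k < x l}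
      = (MeasurableEquiv.piFinSuccAbove (fun _ => ℝ) k) ⁻¹' T := by
    ext x
    simp only [Set.mem_setOf_eq, Set.mem_preimage, hT, MeasurableEquiv.piFinSuccAbove_apply,
      Fin.insertNthEquiv_symm_apply, Fin.removeNth]
    constructor
    · intro h j
      exact h _ (Fin.succAbove_ne k j)
    · intro h l hl
      obtain ⟨j, rfl⟩ := Fin.exists_succAbove_eq hl
      exact h j
  rw [hpre,
    (measurePreserving_piFinSuccAbove (fun j => expMeasure (β j)) k).measure_preimage
      hTm.nullMeasurableSet,
    Measure.prod_apply hTm]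
  have hinner : ∀ t : ℝ, (Measure.pi fun j => expMeasure (β (k.succAbove j)))
      (Prod.mk t ⁻¹' T) = ∏ j : Fin n, expMeasure (β (k.succAbove j)) (Set.Ioi t) := by
    intro t
    have : Prod.mk t ⁻¹' T = Set.pi Set.univ (fun _ : Fin n => Set.Ioi t) := by
      ext y; simp [hT]
    rw [this, Measure.pi_pi]
  simp_rw [hinner]
  rw [expMeasure_eq_withDensity]
  have hpdfm : Measurable (exponentialPDF (β k)) :=
    (measurable_exponentialPDFReal (β k)).ennreal_ofReal
  have hFm : Measurable fun t : ℝ => ∏ j : Fin n, expMeasure (β (k.succAbove j)) (Set.Ioi t) := by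
    apply Finset.measurable_prod
    intro j _
    exact Antitone.measurable fun a b hab => measure_mono (Set.Ioi_subset_Ioi hab)
  rw [lintegral_withDensity_eq_lintegral_mul _ hpdfm hFm]
  have hkey : ∀ t : ℝ, (exponentialPDF (β k) * fun t => ∏ j : Fin n,
        expMeasure (β (k.succAbove j)) (Set.Ioi t)) t
      = ENNReal.ofReal (β k / s) * exponentialPDF s t := by
    intro t
    rcases lt_or_ge t 0 with ht | ht
    · simp [Pi.mul_apply, exponentialPDF_of_neg ht, exponentialPDF_of_neg (r := s) ht]
    · simp only [Pi.mul_apply]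
      rw [exponentialPDF_of_nonneg ht, exponentialPDF_of_nonneg ht]
      have hprod : ∏ j : Fin n, expMeasure (β (k.succAbove j)) (Set.Ioi t)
          = ENNReal.ofReal (Real.exp (-((∑ j : Fin n, β (k.succAbove j)) * t))) := by
        rw [Finset.prod_congr rfl fun j _ => expMeasure_Ioi (hβ _) ht,
          ← ENNReal.ofReal_prod_of_nonneg (fun j _ => (Real.exp_nonneg _)),
          ← Real.exp_sum]
        congr 2
        rw [Finset.sum_mul]
        simp
      rw [hprod, ← ENNReal.ofReal_mul (mul_nonneg (hβ k).le (Real.exp_nonneg _)), ← ENNReal.ofReal_mul (div_nonneg (hβ k).le hs.le)]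
      congr 1
      have hsum : s = β k + ∑ j : Fin n, β (k.succAbove j) := Fin.sum_univ_succAbove β k
      have hexp : -(β k * t) + -((∑ j : Fin n, β (k.succAbove j)) * t) = -(s * t) := by
        rw [hsum]; ring
      rw [mul_assoc, ← Real.exp_add, hexp, ← mul_assoc, div_mul_cancel₀ _ hs.ne']
  simp_rw [hkey]
  have hm : Measurable (exponentialPDF s) := (measurable_exponentialPDFReal s).ennreal_ofReal
  rw [lintegral_const_mul _ hm, lintegral_exponentialPDF_eq_one hs, mul_one]

/-- Gumbel-max identity. If g₁,…,g_m are i.i.d. standard Gumbel random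
variables (CDF x ↦ exp(−exp(−x))) and α ∈ (0,∞)^m, then the probability that
log α_k + g_k is the (strict) maximum of the values log α_j + g_j equals
α_k / Σ_j α_j. -/
theorem stmt_14 (m : ℕ) (hm : 1 ≤ m)
    {Ω : Type*} [MeasurableSpace Ω] (P : Measure Ω) [IsProbabilityMeasure P]
    (g : Fin m → Ω → ℝ) (hmeas : ∀ j, Measurable (g j))
    (hindep : iIndepFun g P)
    (hcdf : ∀ j : Fin m, ∀ x : ℝ,
      P {ω | g j ω ≤ x} = ENNReal.ofReal (Real.exp (-Real.exp (-x))))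
    (α : Fin m → ℝ) (hα : ∀ j, 0 < α j) (k : Fin m) :
    P {ω | ∀ l : Fin m, l ≠ k →
        Real.log (α l) + g l ω < Real.log (α k) + g k ω}
      = ENNReal.ofReal (α k / ∑ j, α j) := by
  obtain ⟨n, rfl⟩ : ∃ n, m = n + 1 := ⟨m - 1, (Nat.succ_pred_eq_of_pos hm).symm⟩
  haveI : ∀ j : Fin (n+1), IsProbabilityMeasure (expMeasure (α j)) :=
    fun j => isProbabilityMeasure_expMeasure (hα j)
  set φ : Fin (n+1) → ℝ → ℝ := fun j t => Real.exp (-(Real.log (α j) + t)) with hφ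
  set Y : Fin (n+1) → Ω → ℝ := fun j => φ j ∘ g j with hY
  have hφm : ∀ j, Measurable (φ j) := fun j => (measurable_const.add measurable_id).neg.exp
  have hYm : ∀ j, Measurable (Y j) := fun j => (hφm j).comp (hmeas j)
  have hlaw : ∀ j, P.map (Y j) = expMeasure (α j) :=
    fun j => gumbel_law P (g j) (hmeas j) (hcdf j) (hα j)
  have hYindep := hindep.comp φ hφm
  have hvec : Measurable fun ω (j : Fin (n+1)) => Y j ω := measurable_pi_lambda _ hYm
  have hjoint : P.map (fun ω j => Y j ω) = Measure.pi (fun j => expMeasure (α j)) := by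
    refine (Measure.pi_eq (μ := fun j => expMeasure (α j)) fun s hs => ?_).symm
    rw [Measure.map_apply hvec (MeasurableSet.univ_pi hs)]
    have hpre : (fun ω (j : Fin (n+1)) => Y j ω) ⁻¹' Set.pi Set.univ s = ⋂ j, Y j ⁻¹' s j := by
      ext ω; simp [Set.mem_pi]
    rw [hpre]
    have hind := hYindep.measure_inter_preimage_eq_mul Finset.univ (fun i _ => hs i)
    simp only [Finset.mem_univ, Set.iInter_true, Set.iInter_iInter_eq_left] at hind
    have hind' : P (⋂ i, Y i ⁻¹' s i) = ∏ i, P (Y i ⁻¹' s i) := hind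
    rw [hind']
    exact Finset.prod_congr rfl fun j _ => by
      rw [← Measure.map_apply (hYm j) (hs j), hlaw j]
  have hSm : MeasurableSet {x : Fin (n+1) → ℝ | ∀ l, l ≠ k → x k < x l} := by
    have : {x : Fin (n+1) → ℝ | ∀ l, l ≠ k → x k < x l}
        = ⋂ l, ⋂ (_ : l ≠ k), {x | x k < x l} := by ext x; simp
    rw [this]
    exact MeasurableSet.iInter fun l => MeasurableSet.iInter fun _ =>
      measurableSet_lt (measurable_pi_apply k) (measurable_pi_apply l)
  have hE : {ω | ∀ l : Fin (n+1), l ≠ k →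
        Real.log (α l) + g l ω < Real.log (α k) + g k ω}
      = (fun ω (j : Fin (n+1)) => Y j ω) ⁻¹' {x | ∀ l, l ≠ k → x k < x l} := by
    ext ω
    simp only [Set.mem_setOf_eq, Set.mem_preimage, hY, hφ, Function.comp]
    refine forall_congr' fun l => imp_congr_right fun _ => ?_
    rw [Real.exp_lt_exp, neg_lt_neg_iff]
  rw [hE, ← Measure.map_apply hvec hSm, hjoint, pi_exp_argmin α hα k]
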